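/- The set R of initial angles from which the rod first falls on the right is open: R := {φ ∈ (0, π) : there exists t > 0 with A φ t = 0 and A φ s ∈ (0, π) for all s ∈ [0, t)} is an open subset of ℝ. -/

import Mathlib

open Real Set Filter Topology


private lemma lipschitz_sin' : LipschitzWith 1 Real.sin :=
  lipschitzWith_of_nnnorm_deriv_le Real.differentiable_sin fun x => by
    simpa [Real.deriv_sin, Real.norm_eq_abs, ← NNReal.coe_le_coe] using Real.abs_cos_le_one x

private lemma lipschitz_cos' : LipschitzWith 1 Real.cos :=
  lipschitzWith_of_nnnorm_deriv_le Real.differentiable_cos fun x => by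
    simpa [Real.deriv_cos, Real.norm_eq_abs, ← NNReal.coe_le_coe] using Real.abs_sin_le_one x

/-- `α` is a solution of the inverted-pendulum equation
`α'' t = -g * cos (α t) + u t * sin (α t)`. -/
def IsPendulumSolution (g : ℝ) (u : ℝ → ℝ) (α : ℝ → ℝ) : Prop :=
  ContDiff ℝ 2 α ∧
    ∀ t : ℝ, deriv (deriv α) t = -g * Real.cos (α t) + u t * Real.sin (α t)

private lemma pend_dep (g : ℝ) (u : ℝ → ℝ) (hu : Continuous u) (A : ℝ → ℝ → ℝ)
    (hA : ∀ φ : ℝ, IsPendulumSolution g u (A φ) ∧ A φ 0 = φ ∧ deriv (A φ) 0 = 0)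
    (b : ℝ) :
    ∃ C > 0, ∀ φ ψ : ℝ, ∀ t ∈ Set.Icc (0:ℝ) b, dist (A φ t) (A ψ t) ≤ C * dist φ ψ := by
  rcases lt_or_ge b 0 with hb | hb
  · exact ⟨1, one_pos, fun φ ψ t ht => absurd ht (by rw [Set.Icc_eq_empty (by linarith)]; simp)⟩
  obtain ⟨M₀, hM₀⟩ := isCompact_Icc.exists_bound_of_continuousOn (s := Icc (0:ℝ) b) hu.continuousOn
  set M : ℝ := max M₀ 0 with hMdef
  have hM0 : 0 ≤ M := le_max_right _ _
  have hM : ∀ t ∈ Icc (0:ℝ) b, |u t| ≤ M := fun t ht =>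
    le_trans (by simpa [Real.norm_eq_abs] using hM₀ t ht) (le_max_left _ _)
  set w : ℝ → ℝ := fun t => u (max 0 (min b t)) with hwdef
  have hwmem : ∀ t : ℝ, max 0 (min b t) ∈ Icc (0:ℝ) b := by
    intro t
    constructor
    · exact le_max_left _ _
    · exact max_le hb (min_le_left _ _)
  have hwM : ∀ t, |w t| ≤ M := fun t => hM _ (hwmem t)
  have hweq : ∀ t ∈ Icc (0:ℝ) b, w t = u t := by
    intro t ht
    simp only [hwdef]
    rw [min_eq_right ht.2, max_eq_right ht.1]
  set K : NNReal := ⟨max 1 (|g| + M), by positivity⟩ with hKdef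
  have hKcoe : (K : ℝ) = max 1 (|g| + M) := rfl
  have hK1 : (1:ℝ) ≤ K := by rw [hKcoe]; exact le_max_left _ _
  have hK2 : |g| + M ≤ (K:ℝ) := by rw [hKcoe]; exact le_max_right _ _
  set v : ℝ → ℝ × ℝ → ℝ × ℝ :=
    fun t p => (p.2, -g * Real.cos p.1 + w t * Real.sin p.1) with hvdef
  have hv : ∀ t, LipschitzWith K (v t) := by
    intro t
    apply LipschitzWith.of_dist_le_mul
    intro p q
    have h1 : dist p.1 q.1 ≤ dist p q := by rw [Prod.dist_eq]; exact le_sup_left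
    have h2 : dist p.2 q.2 ≤ dist p q := by rw [Prod.dist_eq]; exact le_sup_right
    have hcos : |Real.cos p.1 - Real.cos q.1| ≤ dist p.1 q.1 := by
      simpa [Real.dist_eq] using lipschitz_cos'.dist_le_mul p.1 q.1
    have hsin : |Real.sin p.1 - Real.sin q.1| ≤ dist p.1 q.1 := by
      simpa [Real.dist_eq] using lipschitz_sin'.dist_le_mul p.1 q.1
    have key2 : dist (v t p).2 (v t q).2 ≤ (|g| + M) * dist p.1 q.1 := by
      simp only [hvdef, Real.dist_eq]
      have e : -g * Real.cos p.1 + w t * Real.sin p.1 -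
          (-g * Real.cos q.1 + w t * Real.sin q.1)
          = (-g) * (Real.cos p.1 - Real.cos q.1) + w t * (Real.sin p.1 - Real.sin q.1) := by
        ring
      rw [e]
      calc |(-g) * (Real.cos p.1 - Real.cos q.1) + w t * (Real.sin p.1 - Real.sin q.1)|
          ≤ |(-g) * (Real.cos p.1 - Real.cos q.1)| + |w t * (Real.sin p.1 - Real.sin q.1)| :=
            abs_add_le _ _
        _ = |g| * |Real.cos p.1 - Real.cos q.1| + |w t| * |Real.sin p.1 - Real.sin q.1| := by
            rw [abs_mul, abs_mul, abs_neg]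
        _ ≤ |g| * dist p.1 q.1 + M * dist p.1 q.1 := by
            have := hwM t
            have hd := dist_nonneg (x := p.1) (y := q.1)
            nlinarith [abs_nonneg (Real.sin p.1 - Real.sin q.1), abs_nonneg g]
        _ = (|g| + M) * dist p.1 q.1 := by ring
    rw [Prod.dist_eq]
    have hKnn : (0:ℝ) ≤ K := by linarith
    apply sup_le
    · have : dist (v t p).1 (v t q).1 = dist p.2 q.2 := rfl
      rw [this]
      nlinarith [dist_nonneg (x := p) (y := q)]
    · have := key2.trans (by nlinarith [dist_nonneg (x := p.1) (y := q.1)] :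
        (|g| + M) * dist p.1 q.1 ≤ (K:ℝ) * dist p q)
      exact this
  -- trajectories
  have hd1 : ∀ φ, Differentiable ℝ (A φ) := fun φ => (hA φ).1.1.differentiable (by norm_num)
  have hcd1 : ∀ φ, ContDiff ℝ 1 (deriv (A φ)) := by
    intro φ
    have h := (hA φ).1.1
    rw [show (2 : WithTop ℕ∞) = 1 + 1 from rfl, contDiff_succ_iff_deriv] at h
    exact h.2.2
  have hd2 : ∀ φ, Differentiable ℝ (deriv (A φ)) := fun φ => (hcd1 φ).differentiable (by norm_num)
  have hFc : ∀ φ, ContinuousOn (fun t => (A φ t, deriv (A φ) t)) (Icc (0:ℝ) b) :=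
    fun φ => ((hd1 φ).continuous.prodMk (hd2 φ).continuous).continuousOn
  have hF' : ∀ φ, ∀ t ∈ Ico (0:ℝ) b,
      HasDerivWithinAt (fun t => (A φ t, deriv (A φ) t))
        (v t ((fun t => (A φ t, deriv (A φ) t)) t)) (Ici t) t := by
    intro φ t ht
    have h1 : HasDerivAt (A φ) (deriv (A φ) t) t := (hd1 φ t).hasDerivAt
    have h2 : HasDerivAt (deriv (A φ)) (deriv (deriv (A φ)) t) t := (hd2 φ t).hasDerivAt
    have e2 : deriv (deriv (A φ)) t = -g * Real.cos (A φ t) + w t * Real.sin (A φ t) := by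
      rw [(hA φ).1.2 t, hweq t ⟨ht.1, ht.2.le⟩]
    rw [e2] at h2
    exact (h1.prodMk h2).hasDerivWithinAt
  refine ⟨Real.exp (K * b), Real.exp_pos _, ?_⟩
  intro φ ψ t ht
  have h0 : dist ((fun t => (A φ t, deriv (A φ) t)) 0) ((fun t => (A ψ t, deriv (A ψ) t)) 0)
      ≤ dist φ ψ := by
    simp only [Prod.dist_eq, (hA φ).2.1, (hA ψ).2.1, (hA φ).2.2, (hA ψ).2.2]
    simp [dist_nonneg]
  have main := dist_le_of_trajectories_ODE hv (hFc φ) (hF' φ) (hFc ψ) (hF' ψ) h0 t ht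
  have h1 : dist (A φ t) (A ψ t)
      ≤ dist ((fun t => (A φ t, deriv (A φ) t)) t) ((fun t => (A ψ t, deriv (A ψ) t)) t) := by
    rw [Prod.dist_eq]; exact le_sup_left
  have hexp : Real.exp ((K:ℝ) * (t - 0)) ≤ Real.exp ((K:ℝ) * b) := by
    apply Real.exp_le_exp.mpr
    have := ht.2
    nlinarith [K.coe_nonneg]
  calc dist (A φ t) (A ψ t) ≤ dist φ ψ * Real.exp ((K:ℝ) * (t - 0)) := h1.trans main
    _ ≤ Real.exp ((K:ℝ) * b) * dist φ ψ := by
        rw [mul_comm]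
        exact mul_le_mul_of_nonneg_right hexp dist_nonneg

/-- The set `R` of initial angles from which the rod first falls to the right
(reaches `0` having stayed strictly above the floor before) is open. -/
theorem pendulum_right_fall_set_isOpen (g : ℝ) (hg : 0 < g)
    (u : ℝ → ℝ) (hu : Continuous u) (A : ℝ → ℝ → ℝ)
    (hA : ∀ φ : ℝ, IsPendulumSolution g u (A φ) ∧ A φ 0 = φ ∧ deriv (A φ) 0 = 0) :
    IsOpen {φ : ℝ | φ ∈ Set.Ioo (0 : ℝ) Real.pi ∧
      ∃ t > (0 : ℝ), A φ t = 0 ∧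
        ∀ s ∈ Set.Ico (0 : ℝ) t, A φ s ∈ Set.Ioo (0 : ℝ) Real.pi} := by
  rw [Metric.isOpen_iff]
  rintro φ₀ ⟨hφ₀, t₀, ht₀pos, ht₀0, ht₀mem⟩
  have hsol := (hA φ₀).1
  have hαd : Differentiable ℝ (A φ₀) := hsol.1.differentiable (by norm_num)
  have hα1 : ContDiff ℝ 1 (deriv (A φ₀)) := by
    have h := hsol.1
    rw [show (2 : WithTop ℕ∞) = 1 + 1 from rfl, contDiff_succ_iff_deriv] at h
    exact h.2.2
  have hαd2 : Differentiable ℝ (deriv (A φ₀)) := hα1.differentiable (by norm_num)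
  have hcontα : Continuous (A φ₀) := hαd.continuous
  have hcont1 : Continuous (deriv (A φ₀)) := hα1.continuous
  have hcont2 : Continuous (deriv (deriv (A φ₀))) := by
    have e : deriv (deriv (A φ₀)) =
        fun t => -g * Real.cos (A φ₀ t) + u t * Real.sin (A φ₀ t) := funext hsol.2
    rw [e]; fun_prop
  -- step 1 : deriv (A φ₀) t₀ < 0
  have hneg : deriv (A φ₀) t₀ < 0 := by
    by_contra hge
    push_neg at hge
    rcases eq_or_lt_of_le hge with heq | hpos
    · -- deriv = 0 at t₀, second deriv = -g < 0
      have h2 : deriv (deriv (A φ₀)) t₀ = -g := by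
        rw [hsol.2 t₀, ht₀0]; simp
      have hev : ∀ᶠ s in 𝓝 t₀, deriv (deriv (A φ₀)) s < 0 :=
        (hcont2.continuousAt).eventually_lt_const (by rw [h2]; linarith)
      obtain ⟨δ, hδpos, hδ⟩ := Metric.eventually_nhds_iff.mp hev
      set a := max (t₀ - δ/2) (t₀/2) with hadef
      have ha1 : a < t₀ := max_lt (by linarith) (by linarith)
      have ha0 : 0 ≤ a := le_trans (by linarith) (le_max_right _ _)
      have ha2 : t₀ - δ < a := lt_of_lt_of_le (by linarith) (le_max_left _ _)
      have hanti : StrictAntiOn (deriv (A φ₀)) (Icc a t₀) := by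
        apply strictAntiOn_of_deriv_neg (convex_Icc a t₀) hcont1.continuousOn
        intro x hx
        rw [interior_Icc] at hx
        exact hδ (by rw [Real.dist_eq, abs_lt]; constructor <;> [linarith [hx.1]; linarith [hx.2]])
      have hmono : StrictMonoOn (A φ₀) (Icc a t₀) := by
        apply strictMonoOn_of_deriv_pos (convex_Icc a t₀) hcontα.continuousOn
        intro x hx
        rw [interior_Icc] at hx
        have := hanti ⟨hx.1.le, hx.2.le⟩ ⟨ha1.le.trans (le_refl t₀) |>.trans (le_refl t₀), le_rfl⟩ hx.2
        -- deriv (A φ₀) t₀ < deriv (A φ₀) x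
        rw [← heq] at this
        linarith
      have := hmono ⟨le_rfl, ha1.le⟩ ⟨ha1.le, le_rfl⟩ ha1
      rw [ht₀0] at this
      exact absurd this (not_lt.mpr (ht₀mem a ⟨ha0, ha1⟩).1.le)
    · -- deriv > 0 at t₀
      have hev : ∀ᶠ s in 𝓝 t₀, 0 < deriv (A φ₀) s :=
        (hcont1.continuousAt).eventually_const_lt hpos
      obtain ⟨δ, hδpos, hδ⟩ := Metric.eventually_nhds_iff.mp hev
      set a := max (t₀ - δ/2) (t₀/2) with hadef
      have ha1 : a < t₀ := max_lt (by linarith) (by linarith)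
      have ha0 : 0 ≤ a := le_trans (by linarith) (le_max_right _ _)
      have ha2 : t₀ - δ < a := lt_of_lt_of_le (by linarith) (le_max_left _ _)
      have hmono : StrictMonoOn (A φ₀) (Icc a t₀) := by
        apply strictMonoOn_of_deriv_pos (convex_Icc a t₀) hcontα.continuousOn
        intro x hx
        rw [interior_Icc] at hx
        exact hδ (by rw [Real.dist_eq, abs_lt]; constructor <;> [linarith [hx.1]; linarith [hx.2]])
      have := hmono ⟨le_rfl, ha1.le⟩ ⟨ha1.le, le_rfl⟩ ha1
      rw [ht₀0] at this
      exact absurd this (not_lt.mpr (ht₀mem a ⟨ha0, ha1⟩).1.le)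
  -- step 2 : find t₁ > t₀ with A φ₀ t₁ < 0 and A φ₀ < π on [0, t₁]
  have hev : ∀ᶠ s in 𝓝 t₀, deriv (A φ₀) s < 0 ∧ A φ₀ s < Real.pi := by
    have e1 : ∀ᶠ s in 𝓝 t₀, deriv (A φ₀) s < 0 :=
      (hcont1.continuousAt).eventually_lt_const hneg
    have e2 : ∀ᶠ s in 𝓝 t₀, A φ₀ s < Real.pi :=
      (hcontα.continuousAt).eventually_lt_const (by rw [ht₀0]; exact Real.pi_pos)
    exact e1.and e2
  obtain ⟨δ, hδpos, hδ⟩ := Metric.eventually_nhds_iff.mp hev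
  set t₁ := t₀ + δ/2 with ht₁def
  have ht₀t₁ : t₀ < t₁ := by simp only [ht₁def]; linarith
  have h0t₁ : (0:ℝ) ≤ t₁ := by linarith
  have hαt₁ : A φ₀ t₁ < 0 := by
    have hanti : StrictAntiOn (A φ₀) (Icc t₀ t₁) := by
      apply strictAntiOn_of_deriv_neg (convex_Icc t₀ t₁) hcontα.continuousOn
      intro x hx
      rw [interior_Icc] at hx
      have h2 : x < t₀ + δ/2 := ht₁def ▸ hx.2
      exact (hδ (by rw [Real.dist_eq, abs_lt]; exact ⟨by linarith [hx.1], by linarith⟩)).1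
    have := hanti ⟨le_rfl, ht₀t₁.le⟩ ⟨ht₀t₁.le, le_rfl⟩ ht₀t₁
    rw [ht₀0] at this
    exact this
  have hπ : ∀ s ∈ Icc (0:ℝ) t₁, A φ₀ s < Real.pi := by
    intro s hs
    rcases lt_or_ge s t₀ with h | h
    · exact (ht₀mem s ⟨hs.1, h⟩).2
    · have h2 : s ≤ t₀ + δ/2 := ht₁def ▸ hs.2
      exact (hδ (by rw [Real.dist_eq, abs_lt]; exact ⟨by linarith, by linarith⟩)).2
  -- max of A φ₀ on [0, t₁]
  obtain ⟨s₀, hs₀mem, hs₀max⟩ :=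
    isCompact_Icc.exists_isMaxOn (nonempty_Icc.mpr h0t₁) hcontα.continuousOn
  set ε := min (Real.pi - A φ₀ s₀) (-(A φ₀ t₁)) with hεdef
  have hεpos : 0 < ε := lt_min (by linarith [hπ s₀ hs₀mem]) (by linarith)
  obtain ⟨C, hCpos, hCb⟩ := pend_dep g u hu A hA t₁
  obtain ⟨r₂, hr₂pos, hr₂⟩ := Metric.isOpen_iff.mp isOpen_Ioo φ₀ hφ₀
  refine ⟨min r₂ (ε / (2 * C)), lt_min hr₂pos (by positivity), ?_⟩
  intro ψ hψ
  rw [Metric.mem_ball] at hψ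
  have hψIoo : ψ ∈ Ioo (0:ℝ) Real.pi :=
    hr₂ (Metric.mem_ball.mpr (lt_of_lt_of_le hψ (min_le_left _ _)))
  have habs : ∀ t ∈ Icc (0:ℝ) t₁, |A ψ t - A φ₀ t| < ε := by
    intro t ht
    have h1 : dist (A ψ t) (A φ₀ t) ≤ C * dist ψ φ₀ := hCb ψ φ₀ t ht
    have h2 : dist ψ φ₀ < ε / (2 * C) := lt_of_lt_of_le hψ (min_le_right _ _)
    have h3 : C * dist ψ φ₀ < C * (ε / (2 * C)) := by
      exact mul_lt_mul_of_pos_left h2 hCpos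
    have h4 : C * (ε / (2 * C)) = ε / 2 := by field_simp
    rw [← Real.dist_eq]
    calc dist (A ψ t) (A φ₀ t) ≤ C * dist ψ φ₀ := h1
      _ < ε / 2 := by rw [← h4]; exact h3
      _ < ε := by linarith
  have hψt₁ : A ψ t₁ < 0 := by
    have h1 := (abs_lt.mp (habs t₁ ⟨h0t₁, le_rfl⟩)).2
    have h2 : ε ≤ -(A φ₀ t₁) := min_le_right _ _
    linarith
  have hψπ : ∀ t ∈ Icc (0:ℝ) t₁, A ψ t < Real.pi := by
    intro t ht
    have h1 := (abs_lt.mp (habs t ht)).2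
    have h2 : A φ₀ t ≤ A φ₀ s₀ := hs₀max ht
    have h3 : ε ≤ Real.pi - A φ₀ s₀ := min_le_left _ _
    linarith
  have hcψ : Continuous (A ψ) := ((hA ψ).1.1.differentiable (by norm_num)).continuous
  set S := Icc (0:ℝ) t₁ ∩ {s : ℝ | A ψ s ≤ 0} with hSdef
  have hScl : IsCompact S :=
    isCompact_Icc.inter_right (isClosed_le hcψ continuous_const)
  have hSne : S.Nonempty := ⟨t₁, ⟨h0t₁, le_rfl⟩, hψt₁.le⟩
  set τ := sInf S with hτdef
  have hτS : τ ∈ S := hScl.sInf_mem hSne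
  have hτlb : ∀ s ∈ S, τ ≤ s := fun s hs => csInf_le hScl.bddBelow hs
  have hτpos : 0 < τ := by
    rcases eq_or_lt_of_le hτS.1.1 with h | h
    · exfalso
      have h0 : A ψ τ ≤ 0 := hτS.2
      rw [← h, (hA ψ).2.1] at h0
      exact absurd h0 (not_le.mpr hψIoo.1)
    · exact h
  have hpre : ∀ s ∈ Ico (0:ℝ) τ, 0 < A ψ s := by
    intro s hs
    by_contra h
    push_neg at h
    have hmem : s ∈ S := ⟨⟨hs.1, hs.2.le.trans hτS.1.2⟩, h⟩
    exact absurd (hτlb s hmem) (not_le.mpr hs.2)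
  have hτ0 : A ψ τ = 0 := by
    refine le_antisymm hτS.2 ?_
    have htend : Tendsto (A ψ) (𝓝[<] τ) (𝓝 (A ψ τ)) :=
      (hcψ.continuousAt).continuousWithinAt
    refine ge_of_tendsto htend ?_
    filter_upwards [Ioo_mem_nhdsLT_of_mem (⟨hτpos, le_rfl⟩ : τ ∈ Ioc 0 τ)] with s hs
    exact (hpre s ⟨hs.1.le, hs.2⟩).le
  exact ⟨hψIoo, τ, hτpos, hτ0, fun s hs =>
    ⟨hpre s hs, hψπ s ⟨hs.1, hs.2.le.trans hτS.1.2⟩⟩⟩
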